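/- Fix an integer m ≥ 2, reals h > 0, ε > 0, η ≥ 0, A ≥ 1, and s ≥ 0. Regard periodic grid functions as elements of the real inner product space EuclideanSpace ℝ ((ZMod m) × (ZMod m)) with inner product ⟪u, v⟫ = Σ_{(i,j)} u(i,j) v(i,j). Define F_{c,h} and F_{e,h} as follows: F_{c,h}(φ) = h² Σ_{(i,j)} [ (ε⁻²/2) φ(i,j)⁶ + ((ε⁻² + η)/2) φ(i,j)² + (ε²/2) (Δ_h φ)(i,j)² ] + H_h(φ) and F_{e,h}(φ) = h² Σ_{(i,j)} (ε⁻² + η/4 + A) φ(i,j)⁴ + (1 + ηε²/2) h² Σ_{(i,j)} ((𝔇ₓφ)(i,j)² + (𝔇_yφ)(i,j)²) + A h² Σ_{(i,j)} ((𝔇ₓφ)(i,j)² + (𝔇_yφ)(i,j)²)². Let g_c, g_e be maps on grid functions such that for every φ, F_{c,h} has gradient g_c(φ) at φ and F_{e,h} has gradient g_e(φ) at φ (gradients with respect to the inner product ⟪·,·⟫). If grid functions φ and φ' satisfy φ' − φ = s • Δ_h(g_c(φ') − g_e(φ)), then F_{c,h}(φ') − F_{e,h}(φ') ≤ F_{c,h}(φ)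 − F_{e,h}(φ). -/

import Mathlib

/-- The standard discrete Laplacian on periodic grid functions. -/
noncomputable def discreteLaplacian (m : ℕ) [NeZero m] (h : ℝ)
    (u : ZMod m × ZMod m → ℝ) : ZMod m × ZMod m → ℝ :=
  fun p =>
    (u (p.1 + 1, p.2) + u (p.1 - 1, p.2) + u (p.1, p.2 + 1) + u (p.1, p.2 - 1)
      - 4 * u p) / h ^ 2

/-- Center-to-vertex difference in the x direction. -/
noncomputable def Dx (m : ℕ) [NeZero m] (h : ℝ)
    (u : ZMod m × ZMod m → ℝ) : ZMod m × ZMod m → ℝ :=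
  fun p => (u (p.1 + 1, p.2 + 1) - u (p.1, p.2 + 1) + u (p.1 + 1, p.2) - u p) / (2 * h)

/-- Center-to-vertex difference in the y direction. -/
noncomputable def Dy (m : ℕ) [NeZero m] (h : ℝ)
    (u : ZMod m × ZMod m → ℝ) : ZMod m × ZMod m → ℝ :=
  fun p => (u (p.1 + 1, p.2 + 1) - u (p.1 + 1, p.2) + u (p.1, p.2 + 1) - u p) / (2 * h)

/-- Vertex-to-center average. -/
noncomputable def Av (m : ℕ) [NeZero m]
    (ν : ZMod m × ZMod m → ℝ) : ZMod m × ZMod m → ℝ :=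
  fun p => (ν p + ν (p.1 - 1, p.2) + ν (p.1, p.2 - 1) + ν (p.1 - 1, p.2 - 1)) / 4

/-- The discrete energy `H_h`, on grid functions regarded as elements of
`EuclideanSpace ℝ ((ZMod m) × (ZMod m))`. -/
noncomputable def Hh (m : ℕ) [NeZero m] (h A : ℝ)
    (φ : EuclideanSpace ℝ (ZMod m × ZMod m)) : ℝ :=
  A * h ^ 2 * ∑ p : ZMod m × ZMod m, φ p ^ 4 +
    A * h ^ 2 * ∑ p : ZMod m × ZMod m, (Dx m h φ p ^ 2 + Dy m h φ p ^ 2) ^ 2 +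
    3 * h ^ 2 * ∑ p : ZMod m × ZMod m,
      φ p ^ 2 * Av m (fun q => Dx m h φ q ^ 2 + Dy m h φ q ^ 2) p

/-- The convex part `F_{c,h}` of the discrete FCH energy. -/
noncomputable def Fch (m : ℕ) [NeZero m] (h ε η A : ℝ)
    (φ : EuclideanSpace ℝ (ZMod m × ZMod m)) : ℝ :=
  h ^ 2 * ∑ p : ZMod m × ZMod m,
      ((ε ^ 2)⁻¹ / 2 * φ p ^ 6 + ((ε ^ 2)⁻¹ + η) / 2 * φ p ^ 2 +
        ε ^ 2 / 2 * discreteLaplacian m h φ p ^ 2) +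
    Hh m h A φ

/-- The concave part `F_{e,h}` of the discrete FCH energy. -/
noncomputable def Feh (m : ℕ) [NeZero m] (h ε η A : ℝ)
    (φ : EuclideanSpace ℝ (ZMod m × ZMod m)) : ℝ :=
  h ^ 2 * ∑ p : ZMod m × ZMod m, ((ε ^ 2)⁻¹ + η / 4 + A) * φ p ^ 4 +
    (1 + η * ε ^ 2 / 2) * (h ^ 2 * ∑ p : ZMod m × ZMod m,
      (Dx m h φ p ^ 2 + Dy m h φ p ^ 2)) +
    A * (h ^ 2 * ∑ p : ZMod m × ZMod m, (Dx m h φ p ^ 2 + Dy m h φ p ^ 2) ^ 2)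


open Finset

lemma sum_shift {m : ℕ} [NeZero m] (c d : ZMod m) (f : ZMod m × ZMod m → ℝ) :
    ∑ p : ZMod m × ZMod m, f (p.1 - c, p.2 - d) = ∑ p : ZMod m × ZMod m, f p :=
  Fintype.sum_equiv ((Equiv.subRight c).prodCongr (Equiv.subRight d))
    (fun p => f (p.1 - c, p.2 - d)) f (fun _ => rfl)

lemma Hh_rep (m : ℕ) [NeZero m] (h A : ℝ) (φ : EuclideanSpace ℝ (ZMod m × ZMod m)) :
    Hh m h A φ = (A - 1) * h ^ 2 * ((∑ p : ZMod m × ZMod m, φ p ^ 4)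
        + ∑ p : ZMod m × ZMod m, (Dx m h φ p ^ 2 + Dy m h φ p ^ 2) ^ 2)
      + h ^ 2 / 4 * ∑ p : ZMod m × ZMod m,
        ((φ p ^ 4 + 3 * φ p ^ 2 * (Dx m h φ p ^ 2 + Dy m h φ p ^ 2)
            + (Dx m h φ p ^ 2 + Dy m h φ p ^ 2) ^ 2)
          + (φ p ^ 4 + 3 * φ p ^ 2 * (Dx m h φ (p.1 - 1, p.2) ^ 2 + Dy m h φ (p.1 - 1, p.2) ^ 2)
            + (Dx m h φ (p.1 - 1, p.2) ^ 2 + Dy m h φ (p.1 - 1, p.2) ^ 2) ^ 2)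
          + (φ p ^ 4 + 3 * φ p ^ 2 * (Dx m h φ (p.1, p.2 - 1) ^ 2 + Dy m h φ (p.1, p.2 - 1) ^ 2)
            + (Dx m h φ (p.1, p.2 - 1) ^ 2 + Dy m h φ (p.1, p.2 - 1) ^ 2) ^ 2)
          + (φ p ^ 4 + 3 * φ p ^ 2 * (Dx m h φ (p.1 - 1, p.2 - 1) ^ 2 + Dy m h φ (p.1 - 1, p.2 - 1) ^ 2)
            + (Dx m h φ (p.1 - 1, p.2 - 1) ^ 2 + Dy m h φ (p.1 - 1, p.2 - 1) ^ 2) ^ 2)) := by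
  set ν : ZMod m × ZMod m → ℝ := fun q => Dx m h φ q ^ 2 + Dy m h φ q ^ 2 with hν
  have hsplit : ∀ p : ZMod m × ZMod m,
      ((φ p ^ 4 + 3 * φ p ^ 2 * ν p + ν p ^ 2)
        + (φ p ^ 4 + 3 * φ p ^ 2 * ν (p.1 - 1, p.2) + ν (p.1 - 1, p.2) ^ 2)
        + (φ p ^ 4 + 3 * φ p ^ 2 * ν (p.1, p.2 - 1) + ν (p.1, p.2 - 1) ^ 2)
        + (φ p ^ 4 + 3 * φ p ^ 2 * ν (p.1 - 1, p.2 - 1) + ν (p.1 - 1, p.2 - 1) ^ 2))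
      = 4 * φ p ^ 4 + 12 * (φ p ^ 2 * Av m ν p)
        + (ν (p.1 - 1, p.2) ^ 2 + ν (p.1, p.2 - 1) ^ 2 + ν (p.1 - 1, p.2 - 1) ^ 2 + ν p ^ 2) := by
    intro p
    simp only [Av]
    ring
  have hs1 : ∑ p : ZMod m × ZMod m, ν (p.1 - 1, p.2) ^ 2 = ∑ p : ZMod m × ZMod m, ν p ^ 2 := by
    have := sum_shift (m := m) 1 0 (fun q => ν q ^ 2)
    simpa using this
  have hs2 : ∑ p : ZMod m × ZMod m, ν (p.1, p.2 - 1) ^ 2 = ∑ p : ZMod m × ZMod m, ν p ^ 2 := by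
    have := sum_shift (m := m) 0 1 (fun q => ν q ^ 2)
    simpa using this
  have hs3 : ∑ p : ZMod m × ZMod m, ν (p.1 - 1, p.2 - 1) ^ 2 = ∑ p : ZMod m × ZMod m, ν p ^ 2 := by
    have := sum_shift (m := m) 1 1 (fun q => ν q ^ 2)
    simpa using this
  have hbig : ∑ p : ZMod m × ZMod m,
      ((φ p ^ 4 + 3 * φ p ^ 2 * ν p + ν p ^ 2)
        + (φ p ^ 4 + 3 * φ p ^ 2 * ν (p.1 - 1, p.2) + ν (p.1 - 1, p.2) ^ 2)
        + (φ p ^ 4 + 3 * φ p ^ 2 * ν (p.1, p.2 - 1) + ν (p.1, p.2 - 1) ^ 2)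
        + (φ p ^ 4 + 3 * φ p ^ 2 * ν (p.1 - 1, p.2 - 1) + ν (p.1 - 1, p.2 - 1) ^ 2))
      = 4 * (∑ p : ZMod m × ZMod m, φ p ^ 4)
        + 12 * (∑ p : ZMod m × ZMod m, φ p ^ 2 * Av m ν p)
        + 4 * (∑ p : ZMod m × ZMod m, ν p ^ 2) := by
    rw [Finset.sum_congr rfl fun p _ => hsplit p]
    rw [Finset.sum_add_distrib, Finset.sum_add_distrib, ← Finset.mul_sum, ← Finset.mul_sum]
    rw [Finset.sum_add_distrib, Finset.sum_add_distrib, Finset.sum_add_distrib, hs1, hs2, hs3]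
    ring
  show A * h ^ 2 * (∑ p : ZMod m × ZMod m, φ p ^ 4)
      + A * h ^ 2 * (∑ p : ZMod m × ZMod m, ν p ^ 2)
      + 3 * h ^ 2 * (∑ p : ZMod m × ZMod m, φ p ^ 2 * Av m ν p) = _
  rw [hbig]
  ring

open Set

lemma combPow {n : ℕ} (hn : Even n) {a b : ℝ} (ha : 0 ≤ a) (hb : 0 ≤ b) (hab : a + b = 1)
    (x y : ℝ) : (a * x + b * y) ^ n ≤ a * x ^ n + b * y ^ n := by
  have := (Even.convexOn_pow hn (𝕜 := ℝ)).2 (mem_univ x) (mem_univ y) ha hb hab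
  simpa [smul_eq_mul] using this

lemma comb4 {a b : ℝ} (ha : 0 ≤ a) (hb : 0 ≤ b) (hab : a + b = 1) (x y : ℝ) :
    (a * x + b * y) ^ 4 ≤ a * x ^ 4 + b * y ^ 4 := combPow ⟨2, rfl⟩ ha hb hab x y

lemma comb2 {a b : ℝ} (ha : 0 ≤ a) (hb : 0 ≤ b) (hab : a + b = 1) (x y : ℝ) :
    (a * x + b * y) ^ 2 ≤ a * x ^ 2 + b * y ^ 2 := combPow ⟨1, rfl⟩ ha hb hab x y

lemma comb6 {a b : ℝ} (ha : 0 ≤ a) (hb : 0 ≤ b) (hab : a + b = 1) (x y : ℝ) :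
    (a * x + b * y) ^ 6 ≤ a * x ^ 6 + b * y ^ 6 := combPow ⟨3, rfl⟩ ha hb hab x y

lemma nu_conv {a b : ℝ} (ha : 0 ≤ a) (hb : 0 ≤ b) (hab : a + b = 1) (X Y X' Y' : ℝ) :
    ((a * X + b * X') ^ 2 + (a * Y + b * Y') ^ 2) ^ 2
      ≤ a * (X ^ 2 + Y ^ 2) ^ 2 + b * (X' ^ 2 + Y' ^ 2) ^ 2 := by
  have i1 := comb4 ha hb hab X X'
  have i2 := comb4 ha hb hab Y Y'
  have i3 := comb4 ha hb hab (X + Y) (X' + Y')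
  have i4 := comb4 ha hb hab (X - Y) (X' - Y')
  have e3 : a * (X + Y) + b * (X' + Y') = (a * X + b * X') + (a * Y + b * Y') := by ring
  have e4 : a * (X - Y) + b * (X' - Y') = (a * X + b * X') - (a * Y + b * Y') := by ring
  rw [e3] at i3
  rw [e4] at i4
  nlinarith [i1, i2, i3, i4]

lemma g_conv {a b : ℝ} (ha : 0 ≤ a) (hb : 0 ≤ b) (hab : a + b = 1) (u X Y u' X' Y' : ℝ) :
    (a * u + b * u') ^ 4
      + 3 * (a * u + b * u') ^ 2 * ((a * X + b * X') ^ 2 + (a * Y + b * Y') ^ 2)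
      + ((a * X + b * X') ^ 2 + (a * Y + b * Y') ^ 2) ^ 2
    ≤ a * (u ^ 4 + 3 * u ^ 2 * (X ^ 2 + Y ^ 2) + (X ^ 2 + Y ^ 2) ^ 2)
      + b * (u' ^ 4 + 3 * u' ^ 2 * (X' ^ 2 + Y' ^ 2) + (X' ^ 2 + Y' ^ 2) ^ 2) := by
  have i1 := comb4 ha hb hab X X'
  have i2 := comb4 ha hb hab Y Y'
  have i3 := comb4 ha hb hab (X + Y) (X' + Y')
  have i4 := comb4 ha hb hab (X - Y) (X' - Y')
  have i5 := comb4 ha hb hab (u + X) (u' + X')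
  have i6 := comb4 ha hb hab (u - X) (u' - X')
  have i7 := comb4 ha hb hab (u + Y) (u' + Y')
  have i8 := comb4 ha hb hab (u - Y) (u' - Y')
  have e3 : a * (X + Y) + b * (X' + Y') = (a * X + b * X') + (a * Y + b * Y') := by ring
  have e4 : a * (X - Y) + b * (X' - Y') = (a * X + b * X') - (a * Y + b * Y') := by ring
  have e5 : a * (u + X) + b * (u' + X') = (a * u + b * u') + (a * X + b * X') := by ring
  have e6 : a * (u - X) + b * (u' - X') = (a * u + b * u') - (a * X + b * X') := by ring
  have e7 : a * (u + Y) + b * (u' + Y') = (a * u + b * u') + (a * Y + b * Y') := by ring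
  have e8 : a * (u - Y) + b * (u' - Y') = (a * u + b * u') - (a * Y + b * Y') := by ring
  rw [e3] at i3; rw [e4] at i4; rw [e5] at i5; rw [e6] at i6; rw [e7] at i7; rw [e8] at i8
  have key : ∀ u X Y : ℝ, u ^ 4 + 3 * u ^ 2 * (X ^ 2 + Y ^ 2) + (X ^ 2 + Y ^ 2) ^ 2
      = (1/6) * (X ^ 4 + Y ^ 4) + (1/6) * ((X + Y) ^ 4 + (X - Y) ^ 4)
        + (1/4) * ((u + X) ^ 4 + (u - X) ^ 4 + (u + Y) ^ 4 + (u - Y) ^ 4) := by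
    intros; ring
  rw [key, key, key]
  linarith [i1, i2, i3, i4, i5, i6, i7, i8]

lemma euclid_comb_apply {m : ℕ} [NeZero m] (a b : ℝ)
    (φ ψ : EuclideanSpace ℝ (ZMod m × ZMod m)) (p : ZMod m × ZMod m) :
    (a • φ + b • ψ) p = a * φ p + b * ψ p := by
  simp [PiLp.add_apply, PiLp.smul_apply, smul_eq_mul]

lemma Dx_comb {m : ℕ} [NeZero m] (h a b : ℝ)
    (φ ψ : EuclideanSpace ℝ (ZMod m × ZMod m)) (q : ZMod m × ZMod m) :
    Dx m h (a • φ + b • ψ) q = a * Dx m h φ q + b * Dx m h ψ q := by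
  simp only [Dx, euclid_comb_apply, Pi.add_apply, Pi.smul_apply, smul_eq_mul]
  ring

lemma Dy_comb {m : ℕ} [NeZero m] (h a b : ℝ)
    (φ ψ : EuclideanSpace ℝ (ZMod m × ZMod m)) (q : ZMod m × ZMod m) :
    Dy m h (a • φ + b • ψ) q = a * Dy m h φ q + b * Dy m h ψ q := by
  simp only [Dy, euclid_comb_apply, Pi.add_apply, Pi.smul_apply, smul_eq_mul]
  ring

lemma lap_comb {m : ℕ} [NeZero m] (h a b : ℝ)
    (φ ψ : EuclideanSpace ℝ (ZMod m × ZMod m)) (q : ZMod m × ZMod m) :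
    discreteLaplacian m h (a • φ + b • ψ) q
      = a * discreteLaplacian m h φ q + b * discreteLaplacian m h ψ q := by
  simp only [discreteLaplacian, euclid_comb_apply, Pi.add_apply, Pi.smul_apply, smul_eq_mul]
  ring

set_option maxHeartbeats 2000000 in
lemma Hh_convex (m : ℕ) [NeZero m] (h A : ℝ) (hA : 1 ≤ A) :
    ConvexOn ℝ Set.univ (Hh m h A) := by
  refine ⟨convex_univ, fun φ _ ψ _ a b ha hb hab => ?_⟩
  rw [smul_eq_mul, smul_eq_mul, Hh_rep, Hh_rep, Hh_rep]
  have hG : ∀ p q : ZMod m × ZMod m,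
      (a • φ + b • ψ) p ^ 4
        + 3 * (a • φ + b • ψ) p ^ 2 * (Dx m h (a • φ + b • ψ) q ^ 2 + Dy m h (a • φ + b • ψ) q ^ 2)
        + (Dx m h (a • φ + b • ψ) q ^ 2 + Dy m h (a • φ + b • ψ) q ^ 2) ^ 2
      ≤ a * (φ p ^ 4 + 3 * φ p ^ 2 * (Dx m h φ q ^ 2 + Dy m h φ q ^ 2)
            + (Dx m h φ q ^ 2 + Dy m h φ q ^ 2) ^ 2)
        + b * (ψ p ^ 4 + 3 * ψ p ^ 2 * (Dx m h ψ q ^ 2 + Dy m h ψ q ^ 2)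
            + (Dx m h ψ q ^ 2 + Dy m h ψ q ^ 2) ^ 2) := by
    intro p q
    rw [euclid_comb_apply, Dx_comb, Dy_comb]
    exact g_conv ha hb hab _ _ _ _ _ _
  have S1 : ∑ p : ZMod m × ZMod m, (a • φ + b • ψ) p ^ 4
      ≤ a * (∑ p : ZMod m × ZMod m, φ p ^ 4) + b * (∑ p : ZMod m × ZMod m, ψ p ^ 4) := by
    rw [Finset.mul_sum, Finset.mul_sum, ← Finset.sum_add_distrib]
    refine Finset.sum_le_sum fun p _ => ?_
    rw [euclid_comb_apply]
    exact comb4 ha hb hab _ _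
  have S2 : ∑ p : ZMod m × ZMod m,
        (Dx m h (a • φ + b • ψ) p ^ 2 + Dy m h (a • φ + b • ψ) p ^ 2) ^ 2
      ≤ a * (∑ p : ZMod m × ZMod m, (Dx m h φ p ^ 2 + Dy m h φ p ^ 2) ^ 2)
        + b * (∑ p : ZMod m × ZMod m, (Dx m h ψ p ^ 2 + Dy m h ψ p ^ 2) ^ 2) := by
    rw [Finset.mul_sum, Finset.mul_sum, ← Finset.sum_add_distrib]
    refine Finset.sum_le_sum fun p _ => ?_
    rw [Dx_comb, Dy_comb]
    exact nu_conv ha hb hab _ _ _ _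
  have S3 : ∑ p : ZMod m × ZMod m,
        (((a • φ + b • ψ) p ^ 4 + 3 * (a • φ + b • ψ) p ^ 2 * (Dx m h (a • φ + b • ψ) p ^ 2 + Dy m h (a • φ + b • ψ) p ^ 2)
            + (Dx m h (a • φ + b • ψ) p ^ 2 + Dy m h (a • φ + b • ψ) p ^ 2) ^ 2)
          + ((a • φ + b • ψ) p ^ 4 + 3 * (a • φ + b • ψ) p ^ 2 * (Dx m h (a • φ + b • ψ) (p.1 - 1, p.2) ^ 2 + Dy m h (a • φ + b • ψ) (p.1 - 1, p.2) ^ 2)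
            + (Dx m h (a • φ + b • ψ) (p.1 - 1, p.2) ^ 2 + Dy m h (a • φ + b • ψ) (p.1 - 1, p.2) ^ 2) ^ 2)
          + ((a • φ + b • ψ) p ^ 4 + 3 * (a • φ + b • ψ) p ^ 2 * (Dx m h (a • φ + b • ψ) (p.1, p.2 - 1) ^ 2 + Dy m h (a • φ + b • ψ) (p.1, p.2 - 1) ^ 2)
            + (Dx m h (a • φ + b • ψ) (p.1, p.2 - 1) ^ 2 + Dy m h (a • φ + b • ψ) (p.1, p.2 - 1) ^ 2) ^ 2)
          + ((a • φ + b • ψ) p ^ 4 + 3 * (a • φ + b • ψ) p ^ 2 * (Dx m h (a • φ + b • ψ) (p.1 - 1, p.2 - 1) ^ 2 + Dy m h (a • φ + b • ψ) (p.1 - 1, p.2 - 1) ^ 2)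
            + (Dx m h (a • φ + b • ψ) (p.1 - 1, p.2 - 1) ^ 2 + Dy m h (a • φ + b • ψ) (p.1 - 1, p.2 - 1) ^ 2) ^ 2))
      ≤ a * (∑ p : ZMod m × ZMod m,
          ((φ p ^ 4 + 3 * φ p ^ 2 * (Dx m h φ p ^ 2 + Dy m h φ p ^ 2)
            + (Dx m h φ p ^ 2 + Dy m h φ p ^ 2) ^ 2)
          + (φ p ^ 4 + 3 * φ p ^ 2 * (Dx m h φ (p.1 - 1, p.2) ^ 2 + Dy m h φ (p.1 - 1, p.2) ^ 2)
            + (Dx m h φ (p.1 - 1, p.2) ^ 2 + Dy m h φ (p.1 - 1, p.2) ^ 2) ^ 2)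
          + (φ p ^ 4 + 3 * φ p ^ 2 * (Dx m h φ (p.1, p.2 - 1) ^ 2 + Dy m h φ (p.1, p.2 - 1) ^ 2)
            + (Dx m h φ (p.1, p.2 - 1) ^ 2 + Dy m h φ (p.1, p.2 - 1) ^ 2) ^ 2)
          + (φ p ^ 4 + 3 * φ p ^ 2 * (Dx m h φ (p.1 - 1, p.2 - 1) ^ 2 + Dy m h φ (p.1 - 1, p.2 - 1) ^ 2)
            + (Dx m h φ (p.1 - 1, p.2 - 1) ^ 2 + Dy m h φ (p.1 - 1, p.2 - 1) ^ 2) ^ 2)))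
        + b * (∑ p : ZMod m × ZMod m,
          ((ψ p ^ 4 + 3 * ψ p ^ 2 * (Dx m h ψ p ^ 2 + Dy m h ψ p ^ 2)
            + (Dx m h ψ p ^ 2 + Dy m h ψ p ^ 2) ^ 2)
          + (ψ p ^ 4 + 3 * ψ p ^ 2 * (Dx m h ψ (p.1 - 1, p.2) ^ 2 + Dy m h ψ (p.1 - 1, p.2) ^ 2)
            + (Dx m h ψ (p.1 - 1, p.2) ^ 2 + Dy m h ψ (p.1 - 1, p.2) ^ 2) ^ 2)
          + (ψ p ^ 4 + 3 * ψ p ^ 2 * (Dx m h ψ (p.1, p.2 - 1) ^ 2 + Dy m h ψ (p.1, p.2 - 1) ^ 2)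
            + (Dx m h ψ (p.1, p.2 - 1) ^ 2 + Dy m h ψ (p.1, p.2 - 1) ^ 2) ^ 2)
          + (ψ p ^ 4 + 3 * ψ p ^ 2 * (Dx m h ψ (p.1 - 1, p.2 - 1) ^ 2 + Dy m h ψ (p.1 - 1, p.2 - 1) ^ 2)
            + (Dx m h ψ (p.1 - 1, p.2 - 1) ^ 2 + Dy m h ψ (p.1 - 1, p.2 - 1) ^ 2) ^ 2))) := by
    rw [Finset.mul_sum, Finset.mul_sum, ← Finset.sum_add_distrib]
    refine Finset.sum_le_sum fun p _ => ?_
    have h1 := hG p p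
    have h2 := hG p (p.1 - 1, p.2)
    have h3 := hG p (p.1, p.2 - 1)
    have h4 := hG p (p.1 - 1, p.2 - 1)
    linarith
  have hA' : 0 ≤ (A - 1) * h ^ 2 := mul_nonneg (by linarith) (sq_nonneg h)
  have hh4 : 0 ≤ h ^ 2 / 4 := by positivity
  have m1 := mul_le_mul_of_nonneg_left (add_le_add S1 S2) hA'
  have m2 := mul_le_mul_of_nonneg_left S3 hh4
  simp only [WithLp.ofLp_add, WithLp.ofLp_smul] at *
  nlinarith [m1, m2]

set_option maxHeartbeats 1000000 in
lemma Fch_convex (m : ℕ) [NeZero m] (h ε η A : ℝ) (hε : 0 < ε) (hη : 0 ≤ η) (hA : 1 ≤ A) :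
    ConvexOn ℝ Set.univ (Fch m h ε η A) := by
  have hH := Hh_convex m h A hA
  refine ⟨convex_univ, fun φ _ ψ _ a b ha hb hab => ?_⟩
  have hHle := hH.2 (mem_univ φ) (mem_univ ψ) ha hb hab
  rw [smul_eq_mul, smul_eq_mul] at hHle ⊢
  simp only [Fch]
  have hc6 : (0:ℝ) ≤ (ε ^ 2)⁻¹ / 2 := by positivity
  have hc2 : (0:ℝ) ≤ ((ε ^ 2)⁻¹ + η) / 2 := by positivity
  have hcL : (0:ℝ) ≤ ε ^ 2 / 2 := by positivity
  have S : ∑ p : ZMod m × ZMod m,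
        ((ε ^ 2)⁻¹ / 2 * (a • φ + b • ψ) p ^ 6 + ((ε ^ 2)⁻¹ + η) / 2 * (a • φ + b • ψ) p ^ 2 +
          ε ^ 2 / 2 * discreteLaplacian m h (a • φ + b • ψ) p ^ 2)
      ≤ a * (∑ p : ZMod m × ZMod m,
          ((ε ^ 2)⁻¹ / 2 * φ p ^ 6 + ((ε ^ 2)⁻¹ + η) / 2 * φ p ^ 2 +
            ε ^ 2 / 2 * discreteLaplacian m h φ p ^ 2))
        + b * (∑ p : ZMod m × ZMod m,
          ((ε ^ 2)⁻¹ / 2 * ψ p ^ 6 + ((ε ^ 2)⁻¹ + η) / 2 * ψ p ^ 2 +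
            ε ^ 2 / 2 * discreteLaplacian m h ψ p ^ 2)) := by
    rw [Finset.mul_sum, Finset.mul_sum, ← Finset.sum_add_distrib]
    refine Finset.sum_le_sum fun p _ => ?_
    rw [euclid_comb_apply, lap_comb]
    have t1 := mul_le_mul_of_nonneg_left (comb6 ha hb hab (φ p) (ψ p)) hc6
    have t2 := mul_le_mul_of_nonneg_left (comb2 ha hb hab (φ p) (ψ p)) hc2
    have t3 := mul_le_mul_of_nonneg_left
      (comb2 ha hb hab (discreteLaplacian m h φ p) (discreteLaplacian m h ψ p)) hcL
    nlinarith [t1, t2, t3]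
  have hh2 : (0:ℝ) ≤ h ^ 2 := sq_nonneg h
  have m1 := mul_le_mul_of_nonneg_left S hh2
  simp only [WithLp.ofLp_add, WithLp.ofLp_smul] at *
  nlinarith [m1, hHle]

set_option maxHeartbeats 1000000 in
lemma Feh_convex (m : ℕ) [NeZero m] (h ε η A : ℝ) (hε : 0 < ε) (hη : 0 ≤ η) (hA : 1 ≤ A) :
    ConvexOn ℝ Set.univ (Feh m h ε η A) := by
  refine ⟨convex_univ, fun φ _ ψ _ a b ha hb hab => ?_⟩
  rw [smul_eq_mul, smul_eq_mul]
  simp only [Feh]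
  have hc4 : (0:ℝ) ≤ (ε ^ 2)⁻¹ + η / 4 + A := by positivity
  have hcg : (0:ℝ) ≤ 1 + η * ε ^ 2 / 2 := by positivity
  have hA0 : (0:ℝ) ≤ A := by linarith
  have hh2 : (0:ℝ) ≤ h ^ 2 := sq_nonneg h
  have S1 : ∑ p : ZMod m × ZMod m, ((ε ^ 2)⁻¹ + η / 4 + A) * (a • φ + b • ψ) p ^ 4
      ≤ a * (∑ p : ZMod m × ZMod m, ((ε ^ 2)⁻¹ + η / 4 + A) * φ p ^ 4)
        + b * (∑ p : ZMod m × ZMod m, ((ε ^ 2)⁻¹ + η / 4 + A) * ψ p ^ 4) := by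
    rw [Finset.mul_sum, Finset.mul_sum, ← Finset.sum_add_distrib]
    refine Finset.sum_le_sum fun p _ => ?_
    rw [euclid_comb_apply]
    have := mul_le_mul_of_nonneg_left (comb4 ha hb hab (φ p) (ψ p)) hc4
    nlinarith [this]
  have S2 : ∑ p : ZMod m × ZMod m,
        (Dx m h (a • φ + b • ψ) p ^ 2 + Dy m h (a • φ + b • ψ) p ^ 2)
      ≤ a * (∑ p : ZMod m × ZMod m, (Dx m h φ p ^ 2 + Dy m h φ p ^ 2))
        + b * (∑ p : ZMod m × ZMod m, (Dx m h ψ p ^ 2 + Dy m h ψ p ^ 2)) := by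
    rw [Finset.mul_sum, Finset.mul_sum, ← Finset.sum_add_distrib]
    refine Finset.sum_le_sum fun p _ => ?_
    rw [Dx_comb, Dy_comb]
    have t1 := comb2 ha hb hab (Dx m h φ p) (Dx m h ψ p)
    have t2 := comb2 ha hb hab (Dy m h φ p) (Dy m h ψ p)
    linarith
  have S3 : ∑ p : ZMod m × ZMod m,
        (Dx m h (a • φ + b • ψ) p ^ 2 + Dy m h (a • φ + b • ψ) p ^ 2) ^ 2
      ≤ a * (∑ p : ZMod m × ZMod m, (Dx m h φ p ^ 2 + Dy m h φ p ^ 2) ^ 2)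
        + b * (∑ p : ZMod m × ZMod m, (Dx m h ψ p ^ 2 + Dy m h ψ p ^ 2) ^ 2) := by
    rw [Finset.mul_sum, Finset.mul_sum, ← Finset.sum_add_distrib]
    refine Finset.sum_le_sum fun p _ => ?_
    rw [Dx_comb, Dy_comb]
    exact nu_conv ha hb hab _ _ _ _
  have m1 := mul_le_mul_of_nonneg_left S1 hh2
  have m2 := mul_le_mul_of_nonneg_left (mul_le_mul_of_nonneg_left S2 hh2) hcg
  have m3 := mul_le_mul_of_nonneg_left (mul_le_mul_of_nonneg_left S3 hh2) hA0
  simp only [WithLp.ofLp_add, WithLp.ofLp_smul] at *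
  nlinarith [m1, m2, m3]


lemma subgrad {E : Type*} [NormedAddCommGroup E] [InnerProductSpace ℝ E] [CompleteSpace E]
    {F : E → ℝ} (hF : ConvexOn ℝ Set.univ F) {g x : E}
    (hg : HasGradientAt F g x) (y : E) : F x + (inner ℝ g (y - x) : ℝ) ≤ F y := by
  set q : ℝ → ℝ := F ∘ (AffineMap.lineMap x y) with hq
  have hqc : ConvexOn ℝ Set.univ q := by
    have := hF.comp_affineMap (AffineMap.lineMap x y : ℝ →ᵃ[ℝ] E)
    simpa using this
  have hline : HasDerivAt (fun t : ℝ => (AffineMap.lineMap x y : ℝ →ᵃ[ℝ] E) t) (y - x) 0 := by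
    simp only [AffineMap.lineMap_apply_module]
    have he : (fun t : ℝ => (1 - t) • x + t • y) = fun t : ℝ => t • (y - x) + x := by
      funext t
      simp only [smul_sub, sub_smul, one_smul]
      abel
    rw [he]
    simpa using ((hasDerivAt_id (0:ℝ)).smul_const (y - x)).add_const x
  have hd : HasDerivAt q (inner ℝ g (y - x) : ℝ) 0 := by
    have hF' : HasFDerivAt F (InnerProductSpace.toDual ℝ E g : E →L[ℝ] ℝ) x := hg.hasFDerivAt
    have hF'' : HasFDerivAt F (InnerProductSpace.toDual ℝ E g : E →L[ℝ] ℝ)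
        ((AffineMap.lineMap x y : ℝ →ᵃ[ℝ] E) 0) := by
      simpa [AffineMap.lineMap_apply_zero] using hF'
    have := hF''.comp_hasDerivAt 0 hline
    simpa [InnerProductSpace.toDual_apply_apply] using this
  have hs := hqc.le_slope_of_hasDerivAt (Set.mem_univ 0) (Set.mem_univ 1) one_pos hd
  have : slope q 0 1 = q 1 - q 0 := by simp [slope_def_field]
  rw [this] at hs
  have h0 : q 0 = F x := by simp [hq]
  have h1 : q 1 = F y := by simp [hq]
  linarith [hs, h0.le]

lemma sum_shift' {m : ℕ} [NeZero m] (c d : ZMod m) (f : ZMod m × ZMod m → ℝ) :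
    ∑ p : ZMod m × ZMod m, f (p.1 + c, p.2 + d) = ∑ p : ZMod m × ZMod m, f p := by
  have := sum_shift (-c) (-d) f
  simpa [sub_neg_eq_add] using this

lemma lap_inner_nonpos {m : ℕ} [NeZero m] {h : ℝ} (v : ZMod m × ZMod m → ℝ) :
    ∑ p : ZMod m × ZMod m, v p * discreteLaplacian m h v p ≤ 0 := by
  have key : ∀ p : ZMod m × ZMod m, v p * discreteLaplacian m h v p =
      (v p * v (p.1 + 1, p.2) + v p * v (p.1 - 1, p.2) + v p * v (p.1, p.2 + 1)
        + v p * v (p.1, p.2 - 1) - 4 * v p ^ 2) / h ^ 2 := by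
    intro p; simp only [discreteLaplacian]; ring
  simp only [key]
  rw [← Finset.sum_div]
  apply div_nonpos_of_nonpos_of_nonneg _ (sq_nonneg h)
  have e1 : ∑ p : ZMod m × ZMod m, v p * v (p.1 - 1, p.2)
      = ∑ p : ZMod m × ZMod m, v p * v (p.1 + 1, p.2) := by
    have := sum_shift (m := m) 1 0 (fun q => v (q.1 + 1, q.2) * v q)
    simp only [sub_zero, sub_add_cancel, Prod.mk.eta] at this
    rw [this]
    exact Finset.sum_congr rfl fun p _ => by ring
  have e2 : ∑ p : ZMod m × ZMod m, v p * v (p.1, p.2 - 1)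
      = ∑ p : ZMod m × ZMod m, v p * v (p.1, p.2 + 1) := by
    have := sum_shift (m := m) 0 1 (fun q => v (q.1, q.2 + 1) * v q)
    simp only [sub_zero, sub_add_cancel, Prod.mk.eta] at this
    rw [this]
    exact Finset.sum_congr rfl fun p _ => by ring
  have sq1 : ∑ p : ZMod m × ZMod m, v (p.1 + 1, p.2) ^ 2
      = ∑ p : ZMod m × ZMod m, v p ^ 2 := by
    have := sum_shift' (m := m) 1 0 (fun q => v q ^ 2)
    simpa using this
  have sq2 : ∑ p : ZMod m × ZMod m, v (p.1, p.2 + 1) ^ 2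
      = ∑ p : ZMod m × ZMod m, v p ^ 2 := by
    have := sum_shift' (m := m) 0 1 (fun q => v q ^ 2)
    simpa using this
  have b1 : ∑ p : ZMod m × ZMod m, v p * v (p.1 + 1, p.2)
      ≤ ∑ p : ZMod m × ZMod m, v p ^ 2 := by
    calc ∑ p : ZMod m × ZMod m, v p * v (p.1 + 1, p.2)
        ≤ ∑ p : ZMod m × ZMod m, (v p ^ 2 + v (p.1 + 1, p.2) ^ 2) / 2 :=
          Finset.sum_le_sum fun p _ => by nlinarith [sq_nonneg (v p - v (p.1 + 1, p.2))]
      _ = ∑ p : ZMod m × ZMod m, v p ^ 2 := by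
          rw [← Finset.sum_div, Finset.sum_add_distrib, sq1]; ring
  have b2 : ∑ p : ZMod m × ZMod m, v p * v (p.1, p.2 + 1)
      ≤ ∑ p : ZMod m × ZMod m, v p ^ 2 := by
    calc ∑ p : ZMod m × ZMod m, v p * v (p.1, p.2 + 1)
        ≤ ∑ p : ZMod m × ZMod m, (v p ^ 2 + v (p.1, p.2 + 1) ^ 2) / 2 :=
          Finset.sum_le_sum fun p _ => by nlinarith [sq_nonneg (v p - v (p.1, p.2 + 1))]
      _ = ∑ p : ZMod m × ZMod m, v p ^ 2 := by
          rw [← Finset.sum_div, Finset.sum_add_distrib, sq2]; ring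
  have split : ∑ p : ZMod m × ZMod m,
      (v p * v (p.1 + 1, p.2) + v p * v (p.1 - 1, p.2) + v p * v (p.1, p.2 + 1)
        + v p * v (p.1, p.2 - 1) - 4 * v p ^ 2)
      = (∑ p : ZMod m × ZMod m, v p * v (p.1 + 1, p.2))
        + (∑ p : ZMod m × ZMod m, v p * v (p.1 - 1, p.2))
        + (∑ p : ZMod m × ZMod m, v p * v (p.1, p.2 + 1))
        + (∑ p : ZMod m × ZMod m, v p * v (p.1, p.2 - 1))
        - 4 * ∑ p : ZMod m × ZMod m, v p ^ 2 := by
    rw [Finset.sum_sub_distrib, Finset.sum_add_distrib, Finset.sum_add_distrib,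
      Finset.sum_add_distrib, ← Finset.mul_sum]
  rw [split, e1, e2]
  linarith

lemma inner_sum_formula {m : ℕ} [NeZero m] (u v : EuclideanSpace ℝ (ZMod m × ZMod m)) :
    (inner ℝ u v : ℝ) = ∑ p : ZMod m × ZMod m, u p * v p := by
  simp [PiLp.inner_apply, RCLike.inner_apply, conj_trivial, mul_comm]

theorem fully_discrete_scheme_energy_stability (m : ℕ) [NeZero m] (hm : 2 ≤ m)
    (h ε η A s : ℝ) (hh : 0 < h) (hε : 0 < ε) (hη : 0 ≤ η) (hA : 1 ≤ A) (hs : 0 ≤ s)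
    (gc ge : EuclideanSpace ℝ (ZMod m × ZMod m) → EuclideanSpace ℝ (ZMod m × ZMod m))
    (hgc : ∀ φ, HasGradientAt (Fch m h ε η A) (gc φ) φ)
    (hge : ∀ φ, HasGradientAt (Feh m h ε η A) (ge φ) φ)
    (φ φ' : EuclideanSpace ℝ (ZMod m × ZMod m))
    (hstep : φ' - φ =
      s • (WithLp.toLp 2 (discreteLaplacian m h (gc φ' - ge φ)) : EuclideanSpace ℝ (ZMod m × ZMod m))) :
    Fch m h ε η A φ' - Feh m h ε η A φ' ≤ Fch m h ε η A φ - Feh m h ε η A φ := by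
  have hFc := Fch_convex m h ε η A hε hη hA
  have hFe := Feh_convex m h ε η A hε hη hA
  have h1 := subgrad hFc (hgc φ') φ
  have h2 := subgrad hFe (hge φ) φ'
  set w : EuclideanSpace ℝ (ZMod m × ZMod m) := gc φ' - ge φ with hw
  have hkey : (inner ℝ (gc φ') (φ - φ') : ℝ) + (inner ℝ (ge φ) (φ' - φ) : ℝ)
      = - (inner ℝ w (φ' - φ) : ℝ) := by
    have : φ - φ' = -(φ' - φ) := by abel
    rw [this, inner_neg_right, hw, inner_sub_left]
    ring
  have hlap : (inner ℝ w (φ' - φ) : ℝ) ≤ 0 := by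
    rw [hstep, real_inner_smul_right, inner_sum_formula]
    have hnp := lap_inner_nonpos (m := m) (h := h) w
    exact mul_nonpos_iff.mpr (Or.inl ⟨hs, hnp⟩)
  linarith [h1, h2, hkey, hlap]
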